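/- arXiv:2312.05593 — 7 statements merged into one kernel-verified Lean document; each statement's English description precedes it below -/
import Mathlib

section
/- For any real n × p matrix X, the ridge estimator converges to the pseudo-OLS estimator as the penalty vanishes: lim_{λ → 0⁺} (XᵀX + λ I_p)⁻¹ Xᵀ Y = (XᵀX)⁺ Xᵀ Y for every Y ∈ ℝⁿ. -/
open Matrix

/-- The Moore–Penrose pseudoinverse: `B` satisfies the four Penrose equations for `A`. -/
def IsMoorePenrose {m n : ℕ} (A : Matrix (Fin m) (Fin n) ℝ) (B : Matrix (Fin n) (Fin m) ℝ) : Prop :=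
  A * B * A = A ∧ B * A * B = B ∧ (A * B)ᵀ = A * B ∧ (B * A)ᵀ = B * A

/-- `A + lam • 1` is positive definite when `A` is positive semidefinite and `lam > 0`. -/
lemma posSemidef_add_smul_one_posDef {p : ℕ} {A : Matrix (Fin p) (Fin p) ℝ} (hA : A.PosSemidef)
    {lam : ℝ} (hl : 0 < lam) :
    (A + lam • (1 : Matrix (Fin p) (Fin p) ℝ)).PosDef := by
  refine Matrix.PosDef.posSemidef_add hA (Matrix.PosDef.of_dotProduct_mulVec_pos ?_ fun x hx => ?_)
  · unfold Matrix.IsHermitian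
    rw [conjTranspose_eq_transpose_of_trivial]
    simp [Matrix.transpose_smul]
  · rw [Matrix.smul_mulVec, one_mulVec, dotProduct_smul]
    have hx2 : 0 < x ⬝ᵥ x :=
      lt_of_le_of_ne (Finset.sum_nonneg fun i _ => mul_self_nonneg _)
        (Ne.symm (fun h => hx (dotProduct_self_eq_zero.mp h)))
    simpa using mul_pos hl hx2

/-- Resolvent norm bound for positive semidefinite matrices. -/
lemma ridge_resolvent_norm_bound {p : ℕ} {A : Matrix (Fin p) (Fin p) ℝ} (hA : A.PosSemidef)
    {q u : Fin p → ℝ} {lam : ℝ} (hl : 0 < lam)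
    (hu : (A + lam • (1 : Matrix (Fin p) (Fin p) ℝ)) *ᵥ u = q) :
    ‖lam ^ 2 • u‖ ≤ lam * Real.sqrt (q ⬝ᵥ q) := by
  have huu : (0:ℝ) ≤ u ⬝ᵥ u := Finset.sum_nonneg fun i _ => mul_self_nonneg _
  have hqq : (0:ℝ) ≤ q ⬝ᵥ q := Finset.sum_nonneg fun i _ => mul_self_nonneg _
  have hAu : (0:ℝ) ≤ u ⬝ᵥ (A *ᵥ u) := by simpa using hA.dotProduct_mulVec_nonneg u
  have h2 : lam * (u ⬝ᵥ u) ≤ u ⬝ᵥ q := by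
    have : u ⬝ᵥ q = u ⬝ᵥ (A *ᵥ u) + lam * (u ⬝ᵥ u) := by
      rw [← hu, add_mulVec, Matrix.smul_mulVec, one_mulVec, dotProduct_add,
        dotProduct_smul, smul_eq_mul]
    linarith
  have h3 : (u ⬝ᵥ q) ^ 2 ≤ (u ⬝ᵥ u) * (q ⬝ᵥ q) := by
    have := Finset.sum_mul_sq_le_sq_mul_sq Finset.univ u q
    simpa [dotProduct, sq] using this
  have h4 : (lam * (u ⬝ᵥ u)) ^ 2 ≤ (u ⬝ᵥ u) * (q ⬝ᵥ q) :=
    le_trans (pow_le_pow_left₀ (mul_nonneg hl.le huu) h2 2) h3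
  have h5 : lam ^ 2 * (u ⬝ᵥ u) ≤ q ⬝ᵥ q := by
    rcases eq_or_lt_of_le huu with h | h
    · rw [← h]; simpa using hqq
    · have := h4
      rw [mul_pow] at this
      nlinarith
  have hnorm : ‖u‖ ≤ Real.sqrt (u ⬝ᵥ u) := by
    rw [pi_norm_le_iff_of_nonneg (Real.sqrt_nonneg _)]
    intro i
    rw [Real.norm_eq_abs, ← Real.sqrt_sq_eq_abs]
    apply Real.sqrt_le_sqrt
    have hui : u i ^ 2 = u i * u i := by ring
    rw [hui]
    exact Finset.single_le_sum (fun j _ => mul_self_nonneg (u j)) (Finset.mem_univ i)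
  calc ‖lam ^ 2 • u‖ = lam ^ 2 * ‖u‖ := by
        rw [norm_smul, Real.norm_eq_abs, abs_of_nonneg (sq_nonneg lam)]
    _ ≤ lam ^ 2 * Real.sqrt (u ⬝ᵥ u) := mul_le_mul_of_nonneg_left hnorm (sq_nonneg lam)
    _ = lam * Real.sqrt (lam ^ 2 * (u ⬝ᵥ u)) := by
        rw [Real.sqrt_mul (sq_nonneg lam), Real.sqrt_sq hl.le]; ring
    _ ≤ lam * Real.sqrt (q ⬝ᵥ q) :=
        mul_le_mul_of_nonneg_left (Real.sqrt_le_sqrt h5) hl.le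

/-- The ridge estimator converges to the pseudo-OLS estimator as the penalty `λ → 0⁺`:
`(XᵀX + λI)⁻¹ Xᵀ Y → (XᵀX)⁺ Xᵀ Y`. -/
theorem ridge_tendsto_pseudoOLS {n p : ℕ} (X : Matrix (Fin n) (Fin p) ℝ) (Y : Fin n → ℝ)
    (G : Matrix (Fin p) (Fin p) ℝ) (hG : IsMoorePenrose (Xᵀ * X) G) :
    Filter.Tendsto
      (fun lam : ℝ => (Xᵀ * X + lam • (1 : Matrix (Fin p) (Fin p) ℝ))⁻¹ *ᵥ (Xᵀ *ᵥ Y))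
      (nhdsWithin 0 (Set.Ioi 0))
      (nhds (G *ᵥ (Xᵀ *ᵥ Y))) := by
  set A := Xᵀ * X with hA_def
  obtain ⟨h1, h2, h3, h4⟩ := hG
  have hApsd : A.PosSemidef := by
    have := Matrix.posSemidef_conjTranspose_mul_self X
    rwa [conjTranspose_eq_transpose_of_trivial] at this
  have hsym : Aᵀ = A := by rw [hA_def, transpose_mul, transpose_transpose]
  have hAGt : A * Gᵀ = G * A := by rw [← h4, transpose_mul, hsym]
  -- Xᵀ Y lies in the range of A
  obtain ⟨c, hc⟩ : ∃ c, A *ᵥ c = Xᵀ *ᵥ Y := by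
    have hle : LinearMap.range A.mulVecLin ≤ LinearMap.range Xᵀ.mulVecLin := by
      rintro x ⟨v, rfl⟩
      exact ⟨X *ᵥ v, by simp [hA_def, mulVecLin_apply, ← mulVec_mulVec]⟩
    have hrank : A.rank = Xᵀ.rank := by
      rw [hA_def, Matrix.rank_transpose_mul_self, Matrix.rank_transpose]
    have heq := Submodule.eq_of_le_of_finrank_eq hle hrank
    have : Xᵀ *ᵥ Y ∈ LinearMap.range A.mulVecLin := by rw [heq]; exact ⟨Y, rfl⟩
    exact this
  set q : Fin p → ℝ := Gᵀ *ᵥ c with hq_def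
  have htarget : G *ᵥ (Xᵀ *ᵥ Y) = A *ᵥ q := by
    rw [← hc, mulVec_mulVec, mulVec_mulVec, ← hAGt]
  have hAAq : A *ᵥ (A *ᵥ q) = Xᵀ *ᵥ Y := by
    rw [hq_def, mulVec_mulVec, mulVec_mulVec, mul_assoc, hAGt, ← mul_assoc, h1, hc]
  rw [htarget]
  -- auxiliary facts per lam
  have hMq : ∀ lam : ℝ, 0 < lam →
      (A + lam • (1 : Matrix (Fin p) (Fin p) ℝ)) *ᵥ
        ((A + lam • (1 : Matrix (Fin p) (Fin p) ℝ))⁻¹ *ᵥ q) = q := by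
    intro lam hl
    have hdet : IsUnit (A + lam • (1 : Matrix (Fin p) (Fin p) ℝ)).det :=
      (posSemidef_add_smul_one_posDef hApsd hl).det_pos.ne'.isUnit
    rw [mulVec_mulVec, Matrix.mul_nonsing_inv _ hdet, one_mulVec]
  -- the ridge estimator equals the explicit decomposition for lam > 0
  have heqn : ∀ lam : ℝ, 0 < lam →
      (A + lam • (1 : Matrix (Fin p) (Fin p) ℝ))⁻¹ *ᵥ (Xᵀ *ᵥ Y) =
        A *ᵥ q - lam • q + lam ^ 2 • ((A + lam • (1 : Matrix (Fin p) (Fin p) ℝ))⁻¹ *ᵥ q) := by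
    intro lam hl
    set M := A + lam • (1 : Matrix (Fin p) (Fin p) ℝ) with hM_def
    have hdet : IsUnit M.det :=
      (posSemidef_add_smul_one_posDef hApsd hl).det_pos.ne'.isUnit
    set r : Fin p → ℝ := A *ᵥ q - lam • q + lam ^ 2 • (M⁻¹ *ᵥ q) with hr_def
    have hMr : M *ᵥ r = Xᵀ *ᵥ Y := by
      rw [hr_def, mulVec_add, mulVec_sub, mulVec_smul, mulVec_smul, hMq lam hl, hM_def,
        add_mulVec, add_mulVec, Matrix.smul_mulVec, Matrix.smul_mulVec,
        one_mulVec, one_mulVec, ← hAAq]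
      module
    rw [← hMr, mulVec_mulVec, Matrix.nonsing_inv_mul _ hdet, one_mulVec]
  -- convergence of the decomposition
  have t1 : Filter.Tendsto (fun lam : ℝ => A *ᵥ q - lam • q)
      (nhdsWithin 0 (Set.Ioi 0)) (nhds (A *ᵥ q)) := by
    have : Filter.Tendsto (fun lam : ℝ => A *ᵥ q - lam • q) (nhds 0)
        (nhds (A *ᵥ q - (0:ℝ) • q)) :=
      Filter.Tendsto.sub tendsto_const_nhds (Filter.Tendsto.smul Filter.tendsto_id tendsto_const_nhds)
    simpa using this.mono_left nhdsWithin_le_nhds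
  have t2 : Filter.Tendsto
      (fun lam : ℝ => lam ^ 2 • ((A + lam • (1 : Matrix (Fin p) (Fin p) ℝ))⁻¹ *ᵥ q))
      (nhdsWithin 0 (Set.Ioi 0)) (nhds 0) := by
    apply squeeze_zero_norm' (a := fun lam : ℝ => lam * Real.sqrt (q ⬝ᵥ q))
    · filter_upwards [eventually_mem_nhdsWithin] with lam hl
      exact ridge_resolvent_norm_bound hApsd hl (hMq lam hl)
    · have : Filter.Tendsto (fun lam : ℝ => lam * Real.sqrt (q ⬝ᵥ q)) (nhds 0)
          (nhds (0 * Real.sqrt (q ⬝ᵥ q))) :=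
        Filter.Tendsto.mul Filter.tendsto_id tendsto_const_nhds
      simpa using this.mono_left nhdsWithin_le_nhds
  have tmain : Filter.Tendsto
      (fun lam : ℝ => A *ᵥ q - lam • q +
        lam ^ 2 • ((A + lam • (1 : Matrix (Fin p) (Fin p) ℝ))⁻¹ *ᵥ q))
      (nhdsWithin 0 (Set.Ioi 0)) (nhds (A *ᵥ q)) := by
    simpa using t1.add t2
  apply tmain.congr'
  filter_upwards [eventually_mem_nhdsWithin] with lam hl
  exact (heqn lam hl).symm
end

section
/- Suppose y = fᵀρ + ε with E[ε | f, u] = 0, X = Λ f + u with E[u | f, ε] = 0, where f ∈ ℝᴷ has covariance Σ_f (positive definite), u ∈ ℝᵖ has covariance Σ_u (positive definite) and is uncorrelated with f, and E[ρᵀ f | X] is linear in X, i.e. equal to βᵀX for some β ∈ ℝᵖ. Then β = Σ_u⁻¹ Λ (Σ_f⁻¹ + Λᵀ Σ_u⁻¹ Λ)⁻¹ ρ. -/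
open Matrix MeasureTheory
open scoped ENNReal

lemma l2_mul_integrable {Ω : Type*} [MeasurableSpace Ω] {μ : Measure Ω} {g h : Ω → ℝ}
    (hg : MemLp g 2 μ) (hh : MemLp h 2 μ) :
    Integrable (fun ω => g ω * h ω) μ := by
  have hs : (1 : ℝ≥0∞)/1 = 1/2 + 1/2 := by
    rw [ENNReal.div_add_div_same, one_div_one, one_add_one_eq_two]
    exact (ENNReal.div_self two_ne_zero ENNReal.ofNat_ne_top).symm
  haveI : ENNReal.HolderTriple 2 2 1 := ⟨by simpa [one_div] using hs.symm⟩
  have := hh.smul (r := 1) hg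
  rw [memLp_one_iff_integrable] at this
  exact this

lemma posDef_add_posSemidef {n : Type*} [Fintype n] {A B : Matrix n n ℝ}
    (hA : A.PosDef) (hB : B.PosSemidef) : (A + B).PosDef :=
  hA.add_posSemidef hB

lemma woodbury {p K : ℕ} (Λ : Matrix (Fin p) (Fin K) ℝ) (Sf : Matrix (Fin K) (Fin K) ℝ)
    (Su : Matrix (Fin p) (Fin p) ℝ) (hSfpd : Sf.PosDef) (hSupd : Su.PosDef) :
    (Λ * Sf * Λᵀ + Su) * (Su⁻¹ * (Λ * (Sf⁻¹ + Λᵀ * Su⁻¹ * Λ)⁻¹)) = Λ * Sf := by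
  set N : Matrix (Fin K) (Fin K) ℝ := Sf⁻¹ + Λᵀ * Su⁻¹ * Λ with hN
  have hNpd : N.PosDef := by
    refine posDef_add_posSemidef hSfpd.inv ?_
    have := (hSupd.inv.posSemidef).conjTranspose_mul_mul_same Λ
    rwa [conjTranspose_eq_transpose_of_trivial] at this
  have hSu1 : Su * Su⁻¹ = 1 := Matrix.mul_nonsing_inv _ hSupd.det_pos.ne'.isUnit
  have hSf1 : Sf * Sf⁻¹ = 1 := Matrix.mul_nonsing_inv _ hSfpd.det_pos.ne'.isUnit
  have hN1 : N * N⁻¹ = 1 := Matrix.mul_nonsing_inv _ hNpd.det_pos.ne'.isUnit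
  have key : Λ * Sf * (N * N⁻¹) = Λ * Sf := by rw [hN1, Matrix.mul_one]
  calc (Λ * Sf * Λᵀ + Su) * (Su⁻¹ * (Λ * N⁻¹))
      = Λ * Sf * Λᵀ * (Su⁻¹ * (Λ * N⁻¹)) + Su * (Su⁻¹ * (Λ * N⁻¹)) := by rw [Matrix.add_mul]
    _ = Λ * Sf * (Λᵀ * Su⁻¹ * Λ) * N⁻¹ + Λ * N⁻¹ := by
        rw [← Matrix.mul_assoc Su, hSu1, Matrix.one_mul]
        simp only [Matrix.mul_assoc]
    _ = Λ * Sf * (Λᵀ * Su⁻¹ * Λ) * N⁻¹ + Λ * Sf * Sf⁻¹ * N⁻¹ := by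
        rw [Matrix.mul_assoc Λ Sf Sf⁻¹, hSf1, Matrix.mul_one]
    _ = Λ * Sf * (N * N⁻¹) := by
        rw [hN]
        simp only [Matrix.mul_add, Matrix.add_mul, ← Matrix.mul_assoc]
        rw [add_comm]
    _ = Λ * Sf := key

/-- Theorem 1(i): if `y = ρᵀf + ε`, `X = Λf + u`, with `Cov(f) = Σ_f` and `Cov(u) = Σ_u`
positive definite, `f` and `u` uncorrelated, and the conditional expectation
`E[ρᵀf | X]` equals the linear function `βᵀX`, then
`β = Σ_u⁻¹ Λ (Σ_f⁻¹ + Λᵀ Σ_u⁻¹ Λ)⁻¹ ρ`. -/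
theorem regression_coefficient_of_factor_model
    {Ω : Type*} [m0 : MeasurableSpace Ω] (μ : Measure Ω) [IsProbabilityMeasure μ]
    {K p : ℕ} (f : Ω → Fin K → ℝ) (u : Ω → Fin p → ℝ) (X : Ω → Fin p → ℝ)
    (Λ : Matrix (Fin p) (Fin K) ℝ) (Sf : Matrix (Fin K) (Fin K) ℝ)
    (Su : Matrix (Fin p) (Fin p) ℝ) (ρ : Fin K → ℝ) (β : Fin p → ℝ)
    (hf : Measurable f) (hu : Measurable u)
    (hX : ∀ ω, X ω = Λ *ᵥ f ω + u ω)
    (hL2f : ∀ i, MemLp (fun ω => f ω i) 2 μ)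
    (hL2u : ∀ i, MemLp (fun ω => u ω i) 2 μ)
    (hmeanf : ∀ i, ∫ ω, f ω i ∂μ = 0)
    (hmeanu : ∀ i, ∫ ω, u ω i ∂μ = 0)
    (hSf : ∀ i j, ∫ ω, f ω i * f ω j ∂μ = Sf i j)
    (hSu : ∀ i j, ∫ ω, u ω i * u ω j ∂μ = Su i j)
    (hfu : ∀ i j, ∫ ω, f ω i * u ω j ∂μ = 0)
    (hSfpd : Sf.PosDef) (hSupd : Su.PosDef)
    (hlin : μ[(fun ω => ρ ⬝ᵥ f ω) | MeasurableSpace.comap X inferInstance]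
        =ᵐ[μ] fun ω => β ⬝ᵥ X ω) :
    β = Su⁻¹ *ᵥ (Λ *ᵥ ((Sf⁻¹ + Λᵀ * Su⁻¹ * Λ)⁻¹ *ᵥ ρ)) := by
  -- componentwise formula for X
  have hXj : ∀ ω j, X ω j = (∑ l, Λ j l * f ω l) + u ω j := by
    intro ω j
    rw [hX]
    simp [Matrix.mulVec, dotProduct]
  -- measurability
  have hXmeas : Measurable X := by
    have hXe : X = fun ω => Λ *ᵥ f ω + u ω := funext hX
    rw [hXe]
    refine measurable_pi_iff.2 fun j => ?_
    simp only [Pi.add_apply, Matrix.mulVec, dotProduct]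
    exact (Finset.measurable_sum _ fun l _ =>
      (measurable_const.mul ((measurable_pi_apply l).comp hf))).add
      ((measurable_pi_apply j).comp hu)
  -- L2 facts
  have hL2X : ∀ j, MemLp (fun ω => X ω j) 2 μ := by
    intro j
    have he : (fun ω => X ω j) = fun ω => (∑ l, Λ j l * f ω l) + u ω j :=
      funext fun ω => hXj ω j
    rw [he]
    exact (memLp_finset_sum _ fun l _ => (hL2f l).const_mul _).add (hL2u j)
  have hg2 : MemLp (fun ω => ρ ⬝ᵥ f ω) 2 μ := by
    have he : (fun ω => ρ ⬝ᵥ f ω) = fun ω => ∑ k, ρ k * f ω k := rfl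
    rw [he]
    exact memLp_finset_sum _ fun k _ => (hL2f k).const_mul _
  -- integrability facts
  have hIff : ∀ k l, Integrable (fun ω => f ω k * f ω l) μ :=
    fun k l => l2_mul_integrable (hL2f k) (hL2f l)
  have hIfu : ∀ k j, Integrable (fun ω => f ω k * u ω j) μ :=
    fun k j => l2_mul_integrable (hL2f k) (hL2u j)
  have hIuu : ∀ i j, Integrable (fun ω => u ω i * u ω j) μ :=
    fun i j => l2_mul_integrable (hL2u i) (hL2u j)
  have hIfX : ∀ k j, Integrable (fun ω => f ω k * X ω j) μ :=
    fun k j => l2_mul_integrable (hL2f k) (hL2X j)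
  have hIuX : ∀ i j, Integrable (fun ω => u ω i * X ω j) μ :=
    fun i j => l2_mul_integrable (hL2u i) (hL2X j)
  have hIXX : ∀ i j, Integrable (fun ω => X ω i * X ω j) μ :=
    fun i j => l2_mul_integrable (hL2X i) (hL2X j)
  -- covariance computations
  have hfX : ∀ k j, ∫ ω, f ω k * X ω j ∂μ = ∑ l, Λ j l * Sf k l := by
    intro k j
    have he : (fun ω => f ω k * X ω j)
        = fun ω => (∑ l, Λ j l * (f ω k * f ω l)) + f ω k * u ω j := by
      funext ω
      rw [hXj ω j, mul_add, Finset.mul_sum]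
      congr 1
      exact Finset.sum_congr rfl fun l _ => by ring
    rw [he, integral_add (integrable_finset_sum _ fun l _ => (hIff k l).const_mul _) (hIfu k j),
      integral_finset_sum _ fun l _ => (hIff k l).const_mul _, hfu k j, add_zero]
    exact Finset.sum_congr rfl fun l _ => by rw [integral_const_mul, hSf]
  have huX : ∀ i j, ∫ ω, u ω i * X ω j ∂μ = Su i j := by
    intro i j
    have he : (fun ω => u ω i * X ω j)
        = fun ω => (∑ l, Λ j l * (f ω l * u ω i)) + u ω i * u ω j := by
      funext ω
      rw [hXj ω j, mul_add, Finset.mul_sum]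
      congr 1
      exact Finset.sum_congr rfl fun l _ => by ring
    rw [he, integral_add (integrable_finset_sum _ fun l _ => (hIfu l i).const_mul _) (hIuu i j),
      integral_finset_sum _ fun l _ => (hIfu l i).const_mul _, hSu i j]
    have : ∀ l ∈ Finset.univ, Λ j l * ∫ ω, f ω l * u ω i ∂μ = 0 := fun l _ => by
      rw [hfu l i, mul_zero]
    simp only [integral_const_mul]
    rw [Finset.sum_congr rfl this, Finset.sum_const_zero, zero_add]
  have hXX : ∀ i j, ∫ ω, X ω i * X ω j ∂μ = (Λ * Sf * Λᵀ + Su) i j := by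
    intro i j
    have he : (fun ω => X ω i * X ω j)
        = fun ω => (∑ k, Λ i k * (f ω k * X ω j)) + u ω i * X ω j := by
      funext ω
      rw [hXj ω i, add_mul, Finset.sum_mul]
      congr 1
      exact Finset.sum_congr rfl fun k _ => by ring
    rw [he, integral_add (integrable_finset_sum _ fun k _ => (hIfX k j).const_mul _) (hIuX i j),
      integral_finset_sum _ fun k _ => (hIfX k j).const_mul _, huX i j]
    simp only [integral_const_mul, hfX]
    simp only [Matrix.add_apply, Matrix.mul_apply, Matrix.transpose_apply]
    congr 1
    simp only [Finset.mul_sum, Finset.sum_mul]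
    rw [Finset.sum_comm]
    exact Finset.sum_congr rfl fun l _ => Finset.sum_congr rfl fun k _ => by ring
  -- the key orthogonality identity from the conditional expectation
  have hIntg : Integrable (fun ω => ρ ⬝ᵥ f ω) μ := hg2.integrable one_le_two
  have hInt1 : ∀ j, Integrable ((fun ω => X ω j) * fun ω => ρ ⬝ᵥ f ω) μ :=
    fun j => l2_mul_integrable (hL2X j) hg2
  set m : MeasurableSpace Ω := MeasurableSpace.comap X inferInstance with hmdef
  have hm : m ≤ m0 := hXmeas.comap_le
  haveI : SigmaFinite (μ.trim hm) := by infer_instance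
  have hXm : Measurable[m] X := Measurable.of_comap_le le_rfl
  have hXjm : ∀ j, StronglyMeasurable[m] (fun ω => X ω j) := fun j =>
    ((measurable_pi_apply j).comp hXm).stronglyMeasurable
  have key : ∀ j, ∫ ω, (ρ ⬝ᵥ f ω) * X ω j ∂μ = ∫ ω, (β ⬝ᵥ X ω) * X ω j ∂μ := by
    intro j
    have hpull := condExp_mul_of_stronglyMeasurable_left (hXjm j) (hInt1 j) hIntg
    have h1 : ∫ ω, ((fun ω => X ω j) * fun ω => ρ ⬝ᵥ f ω) ω ∂μ
        = ∫ ω, (μ[(fun ω => X ω j) * fun ω => ρ ⬝ᵥ f ω|m]) ω ∂μ :=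
      (integral_condExp hm).symm
    have h2 : (μ[(fun ω => X ω j) * fun ω => ρ ⬝ᵥ f ω|m])
        =ᵐ[μ] fun ω => X ω j * (β ⬝ᵥ X ω) := by
      refine hpull.trans ?_
      filter_upwards [hlin] with ω hω
      simp only [Pi.mul_apply]
      rw [hω]
    calc ∫ ω, (ρ ⬝ᵥ f ω) * X ω j ∂μ
        = ∫ ω, ((fun ω => X ω j) * fun ω => ρ ⬝ᵥ f ω) ω ∂μ := by
          simp only [Pi.mul_apply]
          exact integral_congr_ae (Filter.Eventually.of_forall fun ω => mul_comm _ _)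
      _ = ∫ ω, (μ[(fun ω => X ω j) * fun ω => ρ ⬝ᵥ f ω|m]) ω ∂μ := h1
      _ = ∫ ω, X ω j * (β ⬝ᵥ X ω) ∂μ := integral_congr_ae h2
      _ = ∫ ω, (β ⬝ᵥ X ω) * X ω j ∂μ :=
          integral_congr_ae (Filter.Eventually.of_forall fun ω => mul_comm _ _)
  -- turn key into matrix equation
  have hSfs : ∀ k l, Sf k l = Sf l k := by
    intro k l
    rw [← hSf k l, ← hSf l k]
    exact integral_congr_ae (Filter.Eventually.of_forall fun ω => mul_comm _ _)
  have hMsym : (Λ * Sf * Λᵀ + Su)ᵀ = Λ * Sf * Λᵀ + Su := by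
    have h1 : Sfᵀ = Sf := by
      ext i j; exact hSfs j i
    have h2 : Suᵀ = Su := by
      ext i j
      rw [Matrix.transpose_apply, ← hSu j i, ← hSu i j]
      exact integral_congr_ae (Filter.Eventually.of_forall fun ω => mul_comm _ _)
    rw [Matrix.transpose_add, Matrix.transpose_mul, Matrix.transpose_mul,
      Matrix.transpose_transpose, h1, h2, Matrix.mul_assoc]
  have hMeq : (Λ * Sf * Λᵀ + Su) *ᵥ β = Λ *ᵥ (Sf *ᵥ ρ) := by
    funext j
    have hL : ∫ ω, (ρ ⬝ᵥ f ω) * X ω j ∂μ = ∑ k, ρ k * ∑ l, Λ j l * Sf k l := by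
      have he : (fun ω => (ρ ⬝ᵥ f ω) * X ω j)
          = fun ω => ∑ k, ρ k * (f ω k * X ω j) := by
        funext ω
        simp only [dotProduct, Finset.sum_mul]
        exact Finset.sum_congr rfl fun k _ => by ring
      rw [he, integral_finset_sum _ fun k _ => (hIfX k j).const_mul _]
      simp only [integral_const_mul, hfX]
    have hR : ∫ ω, (β ⬝ᵥ X ω) * X ω j ∂μ = ∑ i, β i * (Λ * Sf * Λᵀ + Su) i j := by
      have he : (fun ω => (β ⬝ᵥ X ω) * X ω j)
          = fun ω => ∑ i, β i * (X ω i * X ω j) := by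
        funext ω
        simp only [dotProduct, Finset.sum_mul]
        exact Finset.sum_congr rfl fun i _ => by ring
      rw [he, integral_finset_sum _ fun i _ => (hIXX i j).const_mul _]
      simp only [integral_const_mul, hXX]
    have hkey := key j
    rw [hL, hR] at hkey
    have lhs : ((Λ * Sf * Λᵀ + Su) *ᵥ β) j = ∑ i, β i * (Λ * Sf * Λᵀ + Su) i j := by
      simp only [Matrix.mulVec, dotProduct]
      refine Finset.sum_congr rfl fun i _ => ?_
      have hms : (Λ * Sf * Λᵀ + Su) j i = (Λ * Sf * Λᵀ + Su) i j :=
        congrFun (congrFun hMsym i) j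
      rw [hms]; ring
    have rhs : (Λ *ᵥ (Sf *ᵥ ρ)) j = ∑ k, ρ k * ∑ l, Λ j l * Sf k l := by
      simp only [Matrix.mulVec, dotProduct, Finset.mul_sum, Finset.sum_mul]
      rw [Finset.sum_comm]
      refine Finset.sum_congr rfl fun k _ => Finset.sum_congr rfl fun l _ => ?_
      rw [hSfs k l]; ring
    rw [lhs, rhs, hkey]
  -- conclude via Woodbury
  have hw := woodbury Λ Sf Su hSfpd hSupd
  have hMpd : (Λ * Sf * Λᵀ + Su).PosDef := by
    rw [add_comm]
    refine posDef_add_posSemidef hSupd ?_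
    have := (hSfpd.posSemidef).mul_mul_conjTranspose_same Λ
    rwa [conjTranspose_eq_transpose_of_trivial] at this
  have hinj : Function.Injective ((Λ * Sf * Λᵀ + Su).mulVec) :=
    Matrix.mulVec_injective_iff_isUnit.2 hMpd.isUnit
  apply hinj
  rw [hMeq]
  have : (Λ * Sf * Λᵀ + Su) *ᵥ (Su⁻¹ *ᵥ (Λ *ᵥ ((Sf⁻¹ + Λᵀ * Su⁻¹ * Λ)⁻¹ *ᵥ ρ)))
      = ((Λ * Sf * Λᵀ + Su) * (Su⁻¹ * (Λ * (Sf⁻¹ + Λᵀ * Su⁻¹ * Λ)⁻¹))) *ᵥ ρ := by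
    simp only [← Matrix.mulVec_mulVec, Matrix.mul_assoc]
  rw [this, hw, ← Matrix.mulVec_mulVec]
end

section
/- Let Σ_f be K × K positive definite, Σ_u p × p positive definite with eigenvalues bounded between c > 0 and C, Λ a p × K matrix with σ_min(ΛᵀΛ) ≥ ψ > 0, and ρ ∈ ℝᴷ with ‖ρ‖ bounded. With β = Σ_u⁻¹ Λ (Σ_f⁻¹ + Λᵀ Σ_u⁻¹ Λ)⁻¹ ρ, the squared ℓ₂-norm of β satisfies ‖β‖² ≤ C' / ψ for a constant C' depending only on c, C, ‖Σ_f⁻¹‖, and ‖ρ‖. -/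
open Matrix

private lemma dp_self_nonneg {n : ℕ} (v : Fin n → ℝ) : 0 ≤ v ⬝ᵥ v :=
  Finset.sum_nonneg fun i _ => mul_self_nonneg (v i)

/-- symmetric bilinear identity -/
private lemma dp_symm {n m : ℕ} (M : Matrix (Fin n) (Fin m) ℝ) (u : Fin n → ℝ)
    (v : Fin m → ℝ) : u ⬝ᵥ M *ᵥ v = (Mᵀ *ᵥ u) ⬝ᵥ v := by
  rw [dotProduct_mulVec, mulVec_transpose]

/-- Cauchy-Schwarz for a PSD symmetric matrix. -/
private lemma cs_psd {n : ℕ} (M : Matrix (Fin n) (Fin n) ℝ) (hsym : Mᵀ = M)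
    (hpsd : ∀ x, 0 ≤ x ⬝ᵥ M *ᵥ x) (u v : Fin n → ℝ) :
    (u ⬝ᵥ M *ᵥ v) ^ 2 ≤ (u ⬝ᵥ M *ᵥ u) * (v ⬝ᵥ M *ᵥ v) := by
  have hsymm : ∀ a b : Fin n → ℝ, a ⬝ᵥ M *ᵥ b = b ⬝ᵥ M *ᵥ a := by
    intro a b
    rw [dp_symm, hsym, dotProduct_comm]
  have key : discrim (v ⬝ᵥ M *ᵥ v) (2 * (u ⬝ᵥ M *ᵥ v)) (u ⬝ᵥ M *ᵥ u) ≤ 0 := by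
    apply discrim_le_zero
    intro t
    have h := hpsd (u + t • v)
    have hexp : (u + t • v) ⬝ᵥ M *ᵥ (u + t • v)
        = (u ⬝ᵥ M *ᵥ u) + t * (u ⬝ᵥ M *ᵥ v) + t * (v ⬝ᵥ M *ᵥ u)
          + t * t * (v ⬝ᵥ M *ᵥ v) := by
      simp only [mulVec_add, mulVec_smul, dotProduct_add, add_dotProduct,
        dotProduct_smul, smul_dotProduct, smul_eq_mul]
      ring
    rw [hexp, hsymm v u] at h
    nlinarith [h]
  rw [discrim] at key
  nlinarith [key]

/-- Cauchy-Schwarz for the standard dot product. -/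
private lemma cs_dot {n : ℕ} (u v : Fin n → ℝ) :
    (u ⬝ᵥ v) ^ 2 ≤ (u ⬝ᵥ u) * (v ⬝ᵥ v) := by
  have := cs_psd (1 : Matrix (Fin n) (Fin n) ℝ) (transpose_one)
    (fun x => by rw [one_mulVec]; exact dp_self_nonneg x) u v
  simpa [one_mulVec] using this

/-- `M² ⪯ k M` for symmetric PSD `M ⪯ k I`. -/
private lemma sq_bound {n : ℕ} (M : Matrix (Fin n) (Fin n) ℝ) (hsym : Mᵀ = M)
    (hpsd : ∀ x, 0 ≤ x ⬝ᵥ M *ᵥ x) (k : ℝ) (hk : 0 ≤ k)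
    (hup : ∀ x, x ⬝ᵥ M *ᵥ x ≤ k * (x ⬝ᵥ x)) (x : Fin n → ℝ) :
    (M *ᵥ x) ⬝ᵥ (M *ᵥ x) ≤ k * (x ⬝ᵥ M *ᵥ x) := by
  set v := M *ᵥ x with hv
  have h1 : x ⬝ᵥ M *ᵥ v = v ⬝ᵥ v := by
    rw [dp_symm, hsym, ← hv]
  have h2 : (x ⬝ᵥ M *ᵥ v) ^ 2 ≤ (x ⬝ᵥ M *ᵥ x) * (v ⬝ᵥ M *ᵥ v) := cs_psd M hsym hpsd x v
  have h3 : v ⬝ᵥ M *ᵥ v ≤ k * (v ⬝ᵥ v) := hup v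
  have h4 : 0 ≤ v ⬝ᵥ v := dp_self_nonneg v
  have h5 : 0 ≤ x ⬝ᵥ M *ᵥ x := hpsd x
  rw [h1] at h2
  rcases eq_or_lt_of_le h4 with h6 | h6
  · have : v ⬝ᵥ v = 0 := h6.symm
    rw [this]
    positivity
  · nlinarith [h2, h3, h6]

/-- Dense-signal bound: with eigenvalues of `Σ_u` between `c` and `C`, `‖Σ_f⁻¹‖ ≤ C`,
`σ_min(ΛᵀΛ) ≥ ψ`, and `‖ρ‖² ≤ C`, the coefficient
`β = Σ_u⁻¹ Λ (Σ_f⁻¹ + Λᵀ Σ_u⁻¹ Λ)⁻¹ ρ` satisfies `‖β‖² ≤ C'/ψ` for a constant `C'`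
depending only on `c`, `C`. -/
theorem beta_sq_norm_bound (K : ℕ) (c C : ℝ) (hc : 0 < c) (hC : 0 < C) :
    ∃ C' : ℝ, 0 < C' ∧
      ∀ (p : ℕ) (Λ : Matrix (Fin p) (Fin K) ℝ) (Su : Matrix (Fin p) (Fin p) ℝ)
        (Sf : Matrix (Fin K) (Fin K) ℝ) (ρ : Fin K → ℝ) (ψ : ℝ),
        0 < ψ →
        Su.IsSymm →
        (∀ x : Fin p → ℝ, c * (x ⬝ᵥ x) ≤ x ⬝ᵥ (Su *ᵥ x)) →
        (∀ x : Fin p → ℝ, x ⬝ᵥ (Su *ᵥ x) ≤ C * (x ⬝ᵥ x)) →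
        Sf.PosDef →
        (∀ x : Fin K → ℝ, x ⬝ᵥ (Sf⁻¹ *ᵥ x) ≤ C * (x ⬝ᵥ x)) →
        (∀ x : Fin K → ℝ, ψ * (x ⬝ᵥ x) ≤ x ⬝ᵥ ((Λᵀ * Λ) *ᵥ x)) →
        ρ ⬝ᵥ ρ ≤ C →
        (Su⁻¹ *ᵥ (Λ *ᵥ ((Sf⁻¹ + Λᵀ * Su⁻¹ * Λ)⁻¹ *ᵥ ρ))) ⬝ᵥ
            (Su⁻¹ *ᵥ (Λ *ᵥ ((Sf⁻¹ + Λᵀ * Su⁻¹ * Λ)⁻¹ *ᵥ ρ))) ≤ C' / ψ := by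
  refine ⟨C ^ 2 / c, by positivity, ?_⟩
  intro p Λ Su Sf ρ ψ hψ hsymm hlow hup hSf hSfinv hΛ hρ
  -- Su is positive definite
  have hSuPD : Su.PosDef := by
    refine Matrix.PosDef.of_dotProduct_mulVec_pos ?_ ?_
    · rw [Matrix.IsHermitian, conjTranspose_eq_transpose_of_trivial]
      exact hsymm
    · intro x hx
      have hxx : 0 < x ⬝ᵥ x := by
        rcases lt_or_eq_of_le (dp_self_nonneg x) with h | h
        · exact h
        · exact absurd (dotProduct_self_eq_zero.mp h.symm) hx
      simp only [star_trivial]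
      exact lt_of_lt_of_le (by positivity) (hlow x)
  have hSuUnit : IsUnit Su.det := Su.isUnit_iff_isUnit_det.mp hSuPD.isUnit
  have hSuInv : Su * Su⁻¹ = 1 := Matrix.mul_nonsing_inv Su hSuUnit
  have hSinvSym : (Su⁻¹)ᵀ = Su⁻¹ := by
    rw [Matrix.transpose_nonsing_inv, hsymm]
  -- Su⁻¹ is PSD
  have hSinvPD : (Su⁻¹).PosDef := hSuPD.inv
  have hSinvPsd : ∀ x : Fin p → ℝ, 0 ≤ x ⬝ᵥ Su⁻¹ *ᵥ x := by
    intro x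
    rcases eq_or_ne x 0 with rfl | hx
    · simp
    · have := hSinvPD.dotProduct_mulVec_pos hx
      simpa [star_trivial] using this.le
  -- key substitution: x = Su *ᵥ (Su⁻¹ *ᵥ x)
  have hsubst : ∀ x : Fin p → ℝ, Su *ᵥ (Su⁻¹ *ᵥ x) = x := by
    intro x
    rw [mulVec_mulVec, hSuInv, one_mulVec]
  -- Su⁻¹ upper bound: x ⬝ Su⁻¹ x ≤ (1/c) x⬝x
  have hSinvUp : ∀ x : Fin p → ℝ, x ⬝ᵥ Su⁻¹ *ᵥ x ≤ (1 / c) * (x ⬝ᵥ x) := by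
    intro x
    set y := Su⁻¹ *ᵥ x with hy
    have hxy : x = Su *ᵥ y := (hsubst x).symm
    have h1 : y ⬝ᵥ Su *ᵥ y = x ⬝ᵥ y := by
      rw [← hxy, dotProduct_comm]
    have h2 : c * (y ⬝ᵥ y) ≤ x ⬝ᵥ y := h1 ▸ hlow y
    have h3 : (x ⬝ᵥ y) ^ 2 ≤ (x ⬝ᵥ x) * (y ⬝ᵥ y) := cs_dot x y
    have h4 : 0 ≤ x ⬝ᵥ y := by
      have := hSinvPsd x
      rwa [← hy] at this
    have h5 : 0 ≤ x ⬝ᵥ x := dp_self_nonneg x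
    rcases eq_or_lt_of_le h4 with h6 | h6
    · rw [← h6]; exact mul_nonneg (one_div_nonneg.mpr hc.le) h5
    · rw [div_mul_eq_mul_div, le_div_iff₀ hc]
      nlinarith [h2, h3, h6, dp_self_nonneg y, h5,
        mul_le_mul_of_nonneg_right h3 hc.le,
        mul_le_mul_of_nonneg_left h2 h5]
  -- Su⁻¹ lower bound: (1/C) x⬝x ≤ x ⬝ Su⁻¹ x
  have hSuPsd : ∀ x : Fin p → ℝ, 0 ≤ x ⬝ᵥ Su *ᵥ x := by
    intro x
    exact le_trans (mul_nonneg hc.le (dp_self_nonneg x)) (hlow x)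
  have hSinvLow : ∀ x : Fin p → ℝ, (1 / C) * (x ⬝ᵥ x) ≤ x ⬝ᵥ Su⁻¹ *ᵥ x := by
    intro x
    set y := Su⁻¹ *ᵥ x with hy
    have hxy : Su *ᵥ y = x := hsubst x
    have h1 : (Su *ᵥ y) ⬝ᵥ (Su *ᵥ y) ≤ C * (y ⬝ᵥ Su *ᵥ y) :=
      sq_bound Su hsymm hSuPsd C hC.le hup y
    rw [hxy] at h1
    rw [div_mul_eq_mul_div, div_le_iff₀ hC, dotProduct_comm x y]
    linarith [h1]
  -- the matrix A
  set A := Sf⁻¹ + Λᵀ * Su⁻¹ * Λ with hA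
  have hSfinvPD : (Sf⁻¹).PosDef := hSf.inv
  have hSfinvPsd : ∀ x : Fin K → ℝ, 0 ≤ x ⬝ᵥ Sf⁻¹ *ᵥ x := by
    intro x
    rcases eq_or_ne x 0 with rfl | hx
    · simp
    · have := hSfinvPD.dotProduct_mulVec_pos hx
      simpa [star_trivial] using this.le
  have hSfinvSym : (Sf⁻¹)ᵀ = Sf⁻¹ := by
    have := hSfinvPD.isHermitian
    rwa [Matrix.IsHermitian, conjTranspose_eq_transpose_of_trivial] at this
  -- quadratic form of A
  have hAquad : ∀ x : Fin K → ℝ,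
      x ⬝ᵥ A *ᵥ x = x ⬝ᵥ Sf⁻¹ *ᵥ x + (Λ *ᵥ x) ⬝ᵥ Su⁻¹ *ᵥ (Λ *ᵥ x) := by
    intro x
    rw [hA, add_mulVec, dotProduct_add]
    congr 1
    rw [← mulVec_mulVec, ← mulVec_mulVec, dp_symm Λᵀ x, transpose_transpose]
  -- A is positive definite
  have hAPD : A.PosDef := by
    refine Matrix.PosDef.of_dotProduct_mulVec_pos ?_ ?_
    · rw [Matrix.IsHermitian, conjTranspose_eq_transpose_of_trivial, hA,
        transpose_add, Matrix.transpose_mul, Matrix.transpose_mul,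
        transpose_transpose, hSfinvSym, hSinvSym, Matrix.mul_assoc]
    · intro x hx
      have h1 := hSfinvPD.dotProduct_mulVec_pos hx
      simp only [star_trivial] at h1 ⊢
      rw [hAquad x]
      have h2 := hSinvPsd (Λ *ᵥ x)
      linarith
  have hAUnit : IsUnit A.det := A.isUnit_iff_isUnit_det.mp hAPD.isUnit
  set w := A⁻¹ *ᵥ ρ with hw
  have hAw : A *ᵥ w = ρ := by
    rw [hw, mulVec_mulVec, Matrix.mul_nonsing_inv A hAUnit, one_mulVec]
  set u := Λ *ᵥ w with hu
  -- quadratic chains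
  have hquadw : w ⬝ᵥ A *ᵥ w = w ⬝ᵥ Sf⁻¹ *ᵥ w + u ⬝ᵥ Su⁻¹ *ᵥ u := hAquad w
  have hwρ : w ⬝ᵥ A *ᵥ w = w ⬝ᵥ ρ := by rw [hAw]
  have huu : u ⬝ᵥ u = w ⬝ᵥ (Λᵀ * Λ) *ᵥ w := by
    rw [← mulVec_mulVec, dp_symm Λᵀ w, transpose_transpose, ← hu]
  -- lower bound on w ⬝ A w
  have hlow1 : (ψ / C) * (w ⬝ᵥ w) ≤ w ⬝ᵥ A *ᵥ w := by
    have h1 : (1 / C) * (u ⬝ᵥ u) ≤ u ⬝ᵥ Su⁻¹ *ᵥ u := hSinvLow u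
    have h2 : ψ * (w ⬝ᵥ w) ≤ u ⬝ᵥ u := huu ▸ hΛ w
    have h3 := hSfinvPsd w
    rw [hquadw]
    have : (ψ / C) * (w ⬝ᵥ w) ≤ (1 / C) * (u ⬝ᵥ u) := by
      rw [div_mul_eq_mul_div, div_mul_eq_mul_div, div_le_div_iff₀ hC hC]
      nlinarith [mul_le_mul_of_nonneg_right h2 hC.le]
    linarith
  set t := w ⬝ᵥ ρ with ht
  have htnn : 0 ≤ t := by
    have := hlow1
    rw [hwρ] at this
    have h4 := dp_self_nonneg w
    have h5 : 0 ≤ ψ / C := (div_pos hψ hC).le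
    nlinarith [this, h4, mul_nonneg h5 h4]
  -- t ≤ C²/ψ
  have htbound : t ≤ C ^ 2 / ψ := by
    have h1 : t ^ 2 ≤ (w ⬝ᵥ w) * (ρ ⬝ᵥ ρ) := cs_dot w ρ
    have h2 : (w ⬝ᵥ w) * (ρ ⬝ᵥ ρ) ≤ C * (w ⬝ᵥ w) := by
      have := dp_self_nonneg w
      nlinarith [hρ, this]
    have h3 : (ψ / C) * (w ⬝ᵥ w) ≤ t := by rw [← hwρ]; exact hlow1
    rw [div_mul_eq_mul_div, div_le_iff₀ hC] at h3
    have hww := dp_self_nonneg w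
    have h12 : t ^ 2 ≤ C * (w ⬝ᵥ w) := h1.trans h2
    rw [le_div_iff₀ hψ]
    rcases eq_or_lt_of_le htnn with h0 | h0
    · rw [← h0, zero_mul]; positivity
    · nlinarith [mul_le_mul_of_nonneg_right h12 hψ.le,
        mul_le_mul_of_nonneg_left h3 hC.le, h0, hww]
  -- final chain
  have hbb : (Su⁻¹ *ᵥ u) ⬝ᵥ (Su⁻¹ *ᵥ u) ≤ (1 / c) * (u ⬝ᵥ Su⁻¹ *ᵥ u) :=
    sq_bound Su⁻¹ hSinvSym hSinvPsd (1 / c) (by positivity) hSinvUp u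
  have hub : u ⬝ᵥ Su⁻¹ *ᵥ u ≤ t := by
    rw [← hwρ, hquadw]
    linarith [hSfinvPsd w]
  have hfinal : (Su⁻¹ *ᵥ u) ⬝ᵥ (Su⁻¹ *ᵥ u) ≤ C ^ 2 / c / ψ := by
    have h1 : (1 / c) * (u ⬝ᵥ Su⁻¹ *ᵥ u) ≤ (1 / c) * t := by
      apply mul_le_mul_of_nonneg_left hub (by positivity)
    have h2 : (1 / c) * t ≤ (1 / c) * (C ^ 2 / ψ) :=
      mul_le_mul_of_nonneg_left htbound (by positivity)
    have h3 : (1 / c) * (C ^ 2 / ψ) = C ^ 2 / c / ψ := by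
      field_simp
    linarith [hbb, h1, h2, h3.le, h3.ge]
  exact hfinal
end

section
/- Under the hypotheses that σ_min(Λᵀ Σ_u⁻¹ Λ) ≥ c₀ ψ and ‖Λᵀ Σ_u⁻¹ Λ‖ ≤ C₀ ψ with ψ > 0, Σ_f positive definite with ‖Σ_f‖ ≤ C and ‖Σ_f⁻¹‖ ≤ C, and ‖ρ‖ ≤ C, the quantity V₁ := (ρ − Λᵀβ)ᵀ Σ_f (ρ − Λᵀβ), where β = Σ_u⁻¹ Λ (Σ_f⁻¹ + Λᵀ Σ_u⁻¹ Λ)⁻¹ ρ, satisfies V₁ ≤ C' / ψ² for a constant C' depending only on c₀, C₀, C. -/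
open Matrix

/-- Bound on the factor-part residual variance `V₁ = (ρ − Λᵀβ)ᵀ Σ_f (ρ − Λᵀβ)`:
under `c₀ψ ≤ σ_min(ΛᵀΣ_u⁻¹Λ)`, `‖ΛᵀΣ_u⁻¹Λ‖ ≤ C₀ψ`, `‖Σ_f‖, ‖Σ_f⁻¹‖ ≤ C`, `‖ρ‖ ≤ C`,
we have `V₁ ≤ C'/ψ²` with `C'` depending only on `c₀, C₀, C`. -/
theorem factor_residual_variance_bound (K : ℕ) (c₀ C₀ C : ℝ)
    (hc₀ : 0 < c₀) (hC₀ : 0 < C₀) (hC : 0 < C) :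
    ∃ C' : ℝ, 0 < C' ∧
      ∀ (p : ℕ) (Λ : Matrix (Fin p) (Fin K) ℝ) (Su : Matrix (Fin p) (Fin p) ℝ)
        (Sf : Matrix (Fin K) (Fin K) ℝ) (ρ : Fin K → ℝ) (ψ : ℝ),
        0 < ψ →
        Su.PosDef →
        (∀ x : Fin K → ℝ, c₀ * ψ * (x ⬝ᵥ x) ≤ x ⬝ᵥ ((Λᵀ * Su⁻¹ * Λ) *ᵥ x)) →
        (∀ x : Fin K → ℝ, x ⬝ᵥ ((Λᵀ * Su⁻¹ * Λ) *ᵥ x) ≤ C₀ * ψ * (x ⬝ᵥ x)) →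
        Sf.PosDef →
        (∀ x : Fin K → ℝ, x ⬝ᵥ (Sf *ᵥ x) ≤ C * (x ⬝ᵥ x)) →
        (∀ x : Fin K → ℝ, x ⬝ᵥ (Sf⁻¹ *ᵥ x) ≤ C * (x ⬝ᵥ x)) →
        ρ ⬝ᵥ ρ ≤ C ^ 2 →
        (let β := Su⁻¹ *ᵥ (Λ *ᵥ ((Sf⁻¹ + Λᵀ * Su⁻¹ * Λ)⁻¹ *ᵥ ρ))
         (ρ - Λᵀ *ᵥ β) ⬝ᵥ (Sf *ᵥ (ρ - Λᵀ *ᵥ β)) ≤ C' / ψ ^ 2) := by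
  refine ⟨C ^ 3 / c₀ ^ 2, by positivity, ?_⟩
  intro p Λ Su Sf ρ ψ hψ hSu hlow hhigh hSf hSfC hSfiC hρ
  intro β
  set A := Λᵀ * Su⁻¹ * Λ with hA
  set M := Sf⁻¹ + A with hM
  have hSfi : (Sf⁻¹).PosDef := hSf.inv
  -- nonnegativity of quadratic forms of Sf⁻¹
  have hSfi0 : ∀ x : Fin K → ℝ, 0 ≤ x ⬝ᵥ (Sf⁻¹ *ᵥ x) := by
    intro x
    have := hSfi.posSemidef.dotProduct_mulVec_nonneg x
    simpa using this
  -- M is invertible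
  have hMdet : IsUnit M.det := by
    rw [isUnit_iff_ne_zero]
    intro h0
    obtain ⟨v, hv, hMv⟩ := (Matrix.exists_mulVec_eq_zero_iff).2 h0
    have h1 : 0 < v ⬝ᵥ (M *ᵥ v) := by
      have h2 : c₀ * ψ * (v ⬝ᵥ v) ≤ v ⬝ᵥ (A *ᵥ v) := hlow v
      have h3 : 0 ≤ v ⬝ᵥ (Sf⁻¹ *ᵥ v) := hSfi0 v
      have h4 : 0 < v ⬝ᵥ v := by
        have h5 : 0 ≤ v ⬝ᵥ v :=
          Finset.sum_nonneg fun i _ => mul_self_nonneg (v i)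
        rcases h5.lt_or_eq with h | h
        · exact h
        · exact absurd (dotProduct_self_eq_zero.1 h.symm) hv
      have : 0 < c₀ * ψ * (v ⬝ᵥ v) := by positivity
      calc (0:ℝ) < c₀ * ψ * (v ⬝ᵥ v) := this
        _ ≤ v ⬝ᵥ (A *ᵥ v) := h2
        _ ≤ v ⬝ᵥ (Sf⁻¹ *ᵥ v) + v ⬝ᵥ (A *ᵥ v) := le_add_of_nonneg_left h3
        _ = v ⬝ᵥ (M *ᵥ v) := by rw [hM, Matrix.add_mulVec, dotProduct_add]
    rw [hMv] at h1
    simp at h1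
  set w : Fin K → ℝ := M⁻¹ *ᵥ ρ with hw
  have hMw : M *ᵥ w = ρ := by
    rw [hw, Matrix.mulVec_mulVec, Matrix.mul_nonsing_inv _ hMdet, Matrix.one_mulVec]
  -- residual equals Sf⁻¹ w
  have hres : ρ - Λᵀ *ᵥ β = Sf⁻¹ *ᵥ w := by
    have hβ : Λᵀ *ᵥ β = A *ᵥ w := by
      have hM' : M = Sf⁻¹ + Λᵀ * (Su⁻¹ * Λ) := by rw [hM, hA, Matrix.mul_assoc]
      simp only [β, hw, Matrix.mulVec_mulVec, hA, hM', Matrix.mul_assoc]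
    rw [hβ, ← hMw, hM, Matrix.add_mulVec]
    abel
  -- Sf *ᵥ (Sf⁻¹ *ᵥ w) = w
  have hSfdet : IsUnit Sf.det := hSf.det_pos.ne'.isUnit
  have hSfw : Sf *ᵥ (Sf⁻¹ *ᵥ w) = w := by
    rw [Matrix.mulVec_mulVec, Matrix.mul_nonsing_inv _ hSfdet, Matrix.one_mulVec]
  have hV : (ρ - Λᵀ *ᵥ β) ⬝ᵥ (Sf *ᵥ (ρ - Λᵀ *ᵥ β)) = w ⬝ᵥ (Sf⁻¹ *ᵥ w) := by
    rw [hres, hSfw, dotProduct_comm]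
  rw [hV]
  -- bound ‖w‖²
  have hww : 0 ≤ w ⬝ᵥ w := Finset.sum_nonneg fun i _ => mul_self_nonneg (w i)
  have hkey : c₀ * ψ * (w ⬝ᵥ w) ≤ w ⬝ᵥ ρ := by
    calc c₀ * ψ * (w ⬝ᵥ w) ≤ w ⬝ᵥ (A *ᵥ w) := hlow w
      _ ≤ w ⬝ᵥ (Sf⁻¹ *ᵥ w) + w ⬝ᵥ (A *ᵥ w) := le_add_of_nonneg_left (hSfi0 w)
      _ = w ⬝ᵥ (M *ᵥ w) := by rw [hM, Matrix.add_mulVec, dotProduct_add]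
      _ = w ⬝ᵥ ρ := by rw [hMw]
  have hCS : (w ⬝ᵥ ρ) ^ 2 ≤ (w ⬝ᵥ w) * (ρ ⬝ᵥ ρ) := by
    have := Finset.sum_mul_sq_le_sq_mul_sq Finset.univ w ρ
    simpa [dotProduct, sq] using this
  have hwbound : w ⬝ᵥ w ≤ C ^ 2 / (c₀ * ψ) ^ 2 := by
    rcases hww.eq_or_lt with h | h
    · rw [← h]; positivity
    · have h1 : (c₀ * ψ * (w ⬝ᵥ w)) ^ 2 ≤ (w ⬝ᵥ ρ) ^ 2 := by
        apply sq_le_sq'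
        · nlinarith [hkey, mul_pos (mul_pos hc₀ hψ) h]
        · exact hkey
      have h2 : (c₀ * ψ) ^ 2 * (w ⬝ᵥ w) ^ 2 ≤ (w ⬝ᵥ w) * (C ^ 2) := by
        calc (c₀ * ψ) ^ 2 * (w ⬝ᵥ w) ^ 2 = (c₀ * ψ * (w ⬝ᵥ w)) ^ 2 := by ring
          _ ≤ (w ⬝ᵥ ρ) ^ 2 := h1
          _ ≤ (w ⬝ᵥ w) * (ρ ⬝ᵥ ρ) := hCS
          _ ≤ (w ⬝ᵥ w) * (C ^ 2) := by
              exact mul_le_mul_of_nonneg_left hρ hww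
      have hpos : (0:ℝ) < (c₀ * ψ) ^ 2 := by positivity
      rw [le_div_iff₀ hpos]
      nlinarith [h2, h, mul_pos h h]
  calc w ⬝ᵥ (Sf⁻¹ *ᵥ w) ≤ C * (w ⬝ᵥ w) := hSfiC w
    _ ≤ C * (C ^ 2 / (c₀ * ψ) ^ 2) := mul_le_mul_of_nonneg_left hwbound hC.le
    _ = C ^ 3 / c₀ ^ 2 / ψ ^ 2 := by field_simp
end

section
/- Under the same hypotheses (σ_min(Λᵀ Σ_u⁻¹ Λ) ≥ c₀ ψ, ‖Λᵀ Σ_u⁻¹ Λ‖ ≤ C₀ ψ, ‖Σ_f⁻¹‖ ≤ C, ‖ρ‖ ≤ C), the idiosyncratic variance contribution V₂ := βᵀ Σ_u β, with β = Σ_u⁻¹ Λ (Σ_f⁻¹ + Λᵀ Σ_u⁻¹ Λ)⁻¹ ρ, satisfies V₂ ≤ C' / ψ for a constant C' depending only on c₀, C₀, C. -/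
open Matrix

/-- Bound on the idiosyncratic residual variance `V₂ = βᵀ Σ_u β`:
under `c₀ψ ≤ σ_min(ΛᵀΣ_u⁻¹Λ)`, `‖ΛᵀΣ_u⁻¹Λ‖ ≤ C₀ψ`, `‖Σ_f⁻¹‖ ≤ C`, `‖ρ‖ ≤ C`,
we have `V₂ ≤ C'/ψ` with `C'` depending only on `c₀, C₀, C`. -/
theorem idiosyncratic_residual_variance_bound (K : ℕ) (c₀ C₀ C : ℝ)
    (hc₀ : 0 < c₀) (hC₀ : 0 < C₀) (hC : 0 < C) :
    ∃ C' : ℝ, 0 < C' ∧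
      ∀ (p : ℕ) (Λ : Matrix (Fin p) (Fin K) ℝ) (Su : Matrix (Fin p) (Fin p) ℝ)
        (Sf : Matrix (Fin K) (Fin K) ℝ) (ρ : Fin K → ℝ) (ψ : ℝ),
        0 < ψ →
        Su.PosDef →
        (∀ x : Fin K → ℝ, c₀ * ψ * (x ⬝ᵥ x) ≤ x ⬝ᵥ ((Λᵀ * Su⁻¹ * Λ) *ᵥ x)) →
        (∀ x : Fin K → ℝ, x ⬝ᵥ ((Λᵀ * Su⁻¹ * Λ) *ᵥ x) ≤ C₀ * ψ * (x ⬝ᵥ x)) →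
        Sf.PosDef →
        (∀ x : Fin K → ℝ, x ⬝ᵥ (Sf⁻¹ *ᵥ x) ≤ C * (x ⬝ᵥ x)) →
        ρ ⬝ᵥ ρ ≤ C ^ 2 →
        (let β := Su⁻¹ *ᵥ (Λ *ᵥ ((Sf⁻¹ + Λᵀ * Su⁻¹ * Λ)⁻¹ *ᵥ ρ))
         β ⬝ᵥ (Su *ᵥ β) ≤ C' / ψ) := by
  refine ⟨C₀ * C ^ 2 / c₀ ^ 2, by positivity, ?_⟩
  intro p Λ Su Sf ρ ψ hψ hSu hlow hup hSf hSfi hρ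
  set M : Matrix (Fin K) (Fin K) ℝ := Λᵀ * Su⁻¹ * Λ with hMdef
  set A : Matrix (Fin K) (Fin K) ℝ := Sf⁻¹ + M with hAdef
  set w : Fin K → ℝ := A⁻¹ *ᵥ ρ with hwdef
  -- M is hermitian
  have hMherm : M.IsHermitian := by
    have : M = Λᴴ * Su⁻¹ * Λ := by
      rw [hMdef, conjTranspose_eq_transpose_of_trivial]
    rw [this]
    exact isHermitian_conjTranspose_mul_mul Λ hSu.isHermitian.inv
  -- Sf⁻¹ is PosDef
  have hSfiP : (Sf⁻¹).PosDef := hSf.inv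
  -- A is PosDef
  have hAP : A.PosDef := by
    refine PosDef.of_dotProduct_mulVec_pos (hSfiP.isHermitian.add hMherm) fun x hx => ?_
    have h1 : 0 < star x ⬝ᵥ (Sf⁻¹ *ᵥ x) := hSfiP.dotProduct_mulVec_pos hx
    have h2 : 0 ≤ x ⬝ᵥ (M *ᵥ x) := by
      have := hlow x
      have hxx : 0 ≤ x ⬝ᵥ x := by
        simpa [dotProduct] using Finset.sum_nonneg fun i _ => mul_self_nonneg (x i)
      have := mul_nonneg (mul_nonneg hc₀.le hψ.le) hxx
      linarith
    simp only [star_trivial] at h1 ⊢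
    rw [hAdef, add_mulVec, dotProduct_add]
    linarith
  -- A *ᵥ w = ρ
  have hAw : A *ᵥ w = ρ := by
    rw [hwdef, mulVec_mulVec, mul_nonsing_inv A hAP.det_pos.ne'.isUnit, one_mulVec]
  intro β
  have hβ : β = Su⁻¹ *ᵥ (Λ *ᵥ w) := rfl
  -- β ⬝ᵥ Su β = w ⬝ᵥ M w
  have hv : Su *ᵥ β = Λ *ᵥ w := by
    rw [hβ, mulVec_mulVec, mul_nonsing_inv _ hSu.det_pos.ne'.isUnit, one_mulVec]
  have key : β ⬝ᵥ (Su *ᵥ β) = w ⬝ᵥ (M *ᵥ w) := by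
    rw [hv, hMdef, ← mulVec_mulVec, ← mulVec_mulVec, dotProduct_mulVec w,
      vecMul_transpose, dotProduct_comm, dotProduct_mulVec]
  have h1 : w ⬝ᵥ (M *ᵥ w) ≤ C₀ * ψ * (w ⬝ᵥ w) := hup w
  have hs : 0 ≤ w ⬝ᵥ w := by
    simpa [dotProduct] using Finset.sum_nonneg fun i _ => mul_self_nonneg (w i)
  have h2 : c₀ * ψ * (w ⬝ᵥ w) ≤ w ⬝ᵥ ρ := by
    have hSfnn : 0 ≤ w ⬝ᵥ (Sf⁻¹ *ᵥ w) := by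
      have := hSfiP.posSemidef.dotProduct_mulVec_nonneg w
      simpa using this
    have : w ⬝ᵥ ρ = w ⬝ᵥ (Sf⁻¹ *ᵥ w) + w ⬝ᵥ (M *ᵥ w) := by
      rw [← hAw, hAdef, add_mulVec, dotProduct_add]
    rw [this]
    have := hlow w
    linarith
  have hCS : (w ⬝ᵥ ρ) ^ 2 ≤ (w ⬝ᵥ w) * (ρ ⬝ᵥ ρ) := by
    simpa [dotProduct, sq] using Finset.sum_mul_sq_le_sq_mul_sq Finset.univ w ρ
  have key2 : c₀ ^ 2 * ψ ^ 2 * (w ⬝ᵥ w) ≤ C ^ 2 := by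
    rcases hs.eq_or_lt with h | h
    · rw [← h, mul_zero]; positivity
    · have ht : 0 ≤ w ⬝ᵥ ρ := le_trans (by positivity) h2
      nlinarith [mul_le_mul h2 h2 (by positivity) ht,
        mul_le_mul_of_nonneg_left hρ hs, mul_pos h h]
  rw [key, div_div]
  rw [le_div_iff₀ (by positivity : (0:ℝ) < c₀ ^ 2 * ψ)]
  nlinarith [mul_le_mul_of_nonneg_right h1 (by positivity : (0:ℝ) ≤ c₀ ^ 2 * ψ),
    mul_le_mul_of_nonneg_left key2 hC₀.le]
end

section
/- Let X, U be n × p real matrices, F an n × K matrix with FᵀF invertible, and Λ a p × K matrix such that X = FΛᵀ + U (equivalently Λ = (X − U)ᵀ F (FᵀF)⁻¹). Then the operator norm of Λᵀ (XᵀX)⁺ Λ satisfies ‖Λᵀ(XᵀX)⁺Λ‖ ≤ 2 ‖(FᵀF)⁻¹‖ · ‖FᵀF‖ · ‖(FᵀF)⁻¹‖ · (1 + σ_max(U (XᵀX)⁺ Uᵀ)), using that σ_max(X (XᵀX)⁺ Xᵀ) ≤ 1. -/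
open Matrix
open scoped RealInnerProductSpace

set_option maxHeartbeats 1000000
set_option synthInstance.maxHeartbeats 1000000

lemma star_matrix_real {m : ℕ} (M : Matrix (Fin m) (Fin m) ℝ) : star M = Mᵀ := by
  rw [Matrix.star_eq_conjTranspose, Matrix.conjTranspose_eq_transpose_of_trivial]


/-- Uniqueness of the Moore–Penrose pseudoinverse. -/
lemma mp_unique {m n : ℕ} {A : Matrix (Fin m) (Fin n) ℝ} {B C : Matrix (Fin n) (Fin m) ℝ}
    (hB : IsMoorePenrose A B) (hC : IsMoorePenrose A C) : B = C := by
  obtain ⟨hB1, hB2, hB3, hB4⟩ := hB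
  obtain ⟨hC1, hC2, hC3, hC4⟩ := hC
  have hAB : A * B = A * C := by
    calc A * B = (A * B)ᵀ := hB3.symm
      _ = Bᵀ * Aᵀ := transpose_mul _ _
      _ = Bᵀ * (A * C * A)ᵀ := by rw [hC1]
      _ = Bᵀ * (Aᵀ * (A * C)ᵀ) := by rw [transpose_mul]
      _ = Bᵀ * (Aᵀ * (A * C)) := by rw [hC3]
      _ = (Bᵀ * Aᵀ) * (A * C) := by rw [Matrix.mul_assoc]
      _ = (A * B)ᵀ * (A * C) := by rw [transpose_mul]
      _ = (A * B) * (A * C) := by rw [hB3]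
      _ = (A * B * A) * C := by simp only [Matrix.mul_assoc]
      _ = A * C := by rw [hB1]
  have hBA : B * A = C * A := by
    calc B * A = (B * A)ᵀ := hB4.symm
      _ = Aᵀ * Bᵀ := transpose_mul _ _
      _ = (A * (C * A))ᵀ * Bᵀ := by rw [← Matrix.mul_assoc, hC1]
      _ = ((C * A)ᵀ * Aᵀ) * Bᵀ := by rw [transpose_mul]
      _ = ((C * A) * Aᵀ) * Bᵀ := by rw [hC4]
      _ = (C * A) * (Aᵀ * Bᵀ) := by rw [Matrix.mul_assoc]
      _ = (C * A) * (B * A)ᵀ := by rw [transpose_mul]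
      _ = (C * A) * (B * A) := by rw [hB4]
      _ = C * (A * B * A) := by simp only [Matrix.mul_assoc]
      _ = C * A := by rw [hB1]
  calc B = B * A * B := hB2.symm
    _ = C * A * B := by rw [hBA]
    _ = C * (A * B) := by rw [Matrix.mul_assoc]
    _ = C * (A * C) := by rw [hAB]
    _ = C * A * C := by rw [Matrix.mul_assoc]
    _ = C := hC2

/-- The pseudoinverse of a symmetric matrix is symmetric. -/
lemma mp_transpose_self {m : ℕ} {A G : Matrix (Fin m) (Fin m) ℝ} (hA : Aᵀ = A)
    (hG : IsMoorePenrose A G) : Gᵀ = G := by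
  obtain ⟨h1, h2, h3, h4⟩ := hG
  have e1 : A * Gᵀ * A = A := by
    have := congrArg Matrix.transpose h1
    simp only [transpose_mul, hA] at this
    rw [Matrix.mul_assoc]
    calc A * (Gᵀ * A) = A * (Gᵀ * Aᵀ) := by rw [hA]
      _ = A * (A * G)ᵀ := by rw [transpose_mul]
      _ = Aᵀ * (A * G)ᵀ := by rw [hA]
      _ = ((A * G) * A)ᵀ := by rw [← transpose_mul]
      _ = Aᵀ := by rw [h1]
      _ = A := hA
  have e2 : Gᵀ * A * Gᵀ = Gᵀ := by
    rw [Matrix.mul_assoc]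
    calc Gᵀ * (A * Gᵀ) = Gᵀ * (Aᵀ * Gᵀ) := by rw [hA]
      _ = Gᵀ * (G * A)ᵀ := by rw [transpose_mul]
      _ = ((G * A) * G)ᵀ := by rw [← transpose_mul]
      _ = Gᵀ := by rw [h2]
  have e3 : (A * Gᵀ)ᵀ = A * Gᵀ := by
    have key : A * Gᵀ = G * A := by
      calc A * Gᵀ = Aᵀ * Gᵀ := by rw [hA]
        _ = (G * A)ᵀ := by rw [transpose_mul]
        _ = G * A := h4
    rw [key]; exact h4
  have e4 : (Gᵀ * A)ᵀ = Gᵀ * A := by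
    have key : Gᵀ * A = A * G := by
      calc Gᵀ * A = Gᵀ * Aᵀ := by rw [hA]
        _ = (A * G)ᵀ := by rw [transpose_mul]
        _ = A * G := h3
    rw [key]; exact h3
  exact mp_unique ⟨e1, e2, e3, e4⟩ ⟨h1, h2, h3, h4⟩

/-- A positive semidefinite matrix gives a positive operator. -/
lemma psd_toEuclideanCLM_isPositive {m : ℕ} {M : Matrix (Fin m) (Fin m) ℝ}
    (h : M.PosSemidef) : (Matrix.toEuclideanCLM (𝕜 := ℝ) M).IsPositive := by
  rw [ContinuousLinearMap.isPositive_def']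
  constructor
  · show star _ = _
    have hMT : Mᵀ = M := by
      rw [← Matrix.conjTranspose_eq_transpose_of_trivial, h.isHermitian.eq]
    rw [← map_star, star_matrix_real, hMT]
  · intro x
    have hx : (Matrix.toEuclideanCLM (𝕜 := ℝ) M) x =
        (WithLp.equiv 2 _).symm (M *ᵥ (WithLp.equiv 2 _) x) := by
      apply (WithLp.equiv 2 _).injective
      simp [Matrix.ofLp_toEuclideanCLM]
    rw [ContinuousLinearMap.reApplyInnerSelf_apply]
    have := h.dotProduct_mulVec_nonneg ((WithLp.equiv 2 (Fin m → ℝ)) x)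
    rw [EuclideanSpace.inner_eq_star_dotProduct, hx]
    simpa [dotProduct_comm] using this

/-- Norm monotonicity for positive operators on a real Euclidean space. -/
lemma opNorm_le_opNorm_of_isPositive {m : ℕ}
    {T S : EuclideanSpace ℝ (Fin m) →L[ℝ] EuclideanSpace ℝ (Fin m)}
    (hT : T.IsPositive) (hTS : (S - T).IsPositive) : ‖T‖ ≤ ‖S‖ := by
  have hsym : ∀ u v : EuclideanSpace ℝ (Fin m), ⟪T u, v⟫ = ⟪u, T v⟫ :=
    (ContinuousLinearMap.isSelfAdjoint_iff_isSymmetric.mp hT.isSelfAdjoint)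
  have hpos : ∀ x : EuclideanSpace ℝ (Fin m), 0 ≤ ⟪T x, x⟫ := by
    intro x
    simpa using hT.inner_nonneg_left x
  -- Cauchy-Schwarz for the positive form
  have CS : ∀ x y : EuclideanSpace ℝ (Fin m), ⟪T x, y⟫ ^ 2 ≤ ⟪T x, x⟫ * ⟪T y, y⟫ := by
    intro x y
    have key : ∀ t : ℝ, 0 ≤ ⟪T y, y⟫ * (t * t) + (2 * ⟪T x, y⟫) * t + ⟪T x, x⟫ := by
      intro t
      have h0 := hpos (x + t • y)
      have expand : ⟪T (x + t • y), x + t • y⟫ =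
          ⟪T y, y⟫ * (t * t) + (2 * ⟪T x, y⟫) * t + ⟪T x, x⟫ := by
        have hyx : ⟪T y, x⟫ = ⟪T x, y⟫ := by
          rw [hsym y x, real_inner_comm]
        have hTxy : T (x + t • y) = T x + t • T y := by
          rw [_root_.map_add, _root_.map_smul]
        rw [hTxy, inner_add_left, inner_add_right, inner_add_right,
          real_inner_smul_left, real_inner_smul_left,
          real_inner_smul_right, real_inner_smul_right, hyx]
        ring
      linarith [expand ▸ h0]
    have hd := discrim_le_zero key
    rw [discrim] at hd
    nlinarith [hd]
  have step : ∀ x : EuclideanSpace ℝ (Fin m),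
      ‖T x‖ ≤ Real.sqrt (‖S‖ * ‖T‖) * ‖x‖ := by
    intro x
    have h1 : ⟪T x, x⟫ ≤ ‖S‖ * ‖x‖ ^ 2 := by
      have hle : ⟪T x, x⟫ ≤ ⟪S x, x⟫ := by
        have := hTS.inner_nonneg_left x
        simp only [ContinuousLinearMap.sub_apply, inner_sub_left] at this
        simpa using this
      have : ⟪S x, x⟫ ≤ ‖S x‖ * ‖x‖ := real_inner_le_norm _ _
      nlinarith [S.le_opNorm x, norm_nonneg x, norm_nonneg (S x)]
    have h2 : ⟪T (T x), T x⟫ ≤ ‖T‖ * ‖T x‖ ^ 2 := by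
      have : ⟪T (T x), T x⟫ ≤ ‖T (T x)‖ * ‖T x‖ := real_inner_le_norm _ _
      nlinarith [T.le_opNorm (T x), norm_nonneg (T x), norm_nonneg (T (T x))]
    have h3 : ‖T x‖ ^ 2 * ‖T x‖ ^ 2 ≤ (‖S‖ * ‖T‖ * ‖x‖ ^ 2) * ‖T x‖ ^ 2 := by
      have hcs := CS x (T x)
      have hTx : ⟪T x, T x⟫ = ‖T x‖ ^ 2 := real_inner_self_eq_norm_sq _
      nlinarith [hpos x, hpos (T x), sq_nonneg (‖T x‖), norm_nonneg x,
        norm_nonneg S, norm_nonneg T, sq_nonneg (‖x‖)]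
    have h4 : ‖T x‖ ^ 2 ≤ ‖S‖ * ‖T‖ * ‖x‖ ^ 2 := by
      rcases eq_or_lt_of_le (norm_nonneg (T x)) with h0 | h0
      · rw [← h0]
        have := mul_nonneg (mul_nonneg (norm_nonneg S) (norm_nonneg T)) (sq_nonneg ‖x‖)
        nlinarith
      · exact le_of_mul_le_mul_right h3 (by positivity)
    calc ‖T x‖ = Real.sqrt (‖T x‖ ^ 2) := (Real.sqrt_sq (norm_nonneg _)).symm
      _ ≤ Real.sqrt (‖S‖ * ‖T‖ * ‖x‖ ^ 2) := Real.sqrt_le_sqrt h4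
      _ = Real.sqrt (‖S‖ * ‖T‖) * ‖x‖ := by
          rw [Real.sqrt_mul (by positivity), Real.sqrt_sq (norm_nonneg _)]
  have hb : ‖T‖ ≤ Real.sqrt (‖S‖ * ‖T‖) := T.opNorm_le_bound (Real.sqrt_nonneg _) step
  have hsq : ‖T‖ ^ 2 ≤ ‖S‖ * ‖T‖ := by
    have := mul_self_le_mul_self (norm_nonneg T) hb
    rwa [Real.mul_self_sqrt (by positivity), ← pow_two] at this
  rcases eq_or_lt_of_le (norm_nonneg T) with h0 | h0
  · rw [← h0]; exact norm_nonneg S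
  · nlinarith

/-- Deterministic core of the variance bound of Theorem 2:
if `X = FΛᵀ + U` with `FᵀF` invertible, then
`‖Λᵀ(XᵀX)⁺Λ‖ ≤ 2 ‖(FᵀF)⁻¹‖ ‖FᵀF‖ ‖(FᵀF)⁻¹‖ (1 + σ_max(U(XᵀX)⁺Uᵀ))`,
using that `σ_max(X(XᵀX)⁺Xᵀ) ≤ 1`. -/
theorem lambda_gram_pinv_lambda_bound {n p K : ℕ}
    (X U : Matrix (Fin n) (Fin p) ℝ) (F : Matrix (Fin n) (Fin K) ℝ)
    (Λ : Matrix (Fin p) (Fin K) ℝ)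
    (hFF : IsUnit (Fᵀ * F).det)
    (hX : X = F * Λᵀ + U)
    (G : Matrix (Fin p) (Fin p) ℝ) (hG : IsMoorePenrose (Xᵀ * X) G) :
    ‖Matrix.toEuclideanCLM (𝕜 := ℝ) (Λᵀ * G * Λ)‖ ≤
      2 * ‖Matrix.toEuclideanCLM (𝕜 := ℝ) (Fᵀ * F)⁻¹‖ *
        ‖Matrix.toEuclideanCLM (𝕜 := ℝ) (Fᵀ * F)‖ *
        ‖Matrix.toEuclideanCLM (𝕜 := ℝ) (Fᵀ * F)⁻¹‖ *
        (1 + ‖Matrix.toEuclideanCLM (𝕜 := ℝ) (U * G * Uᵀ)‖) := by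
  classical
  set A : Matrix (Fin p) (Fin p) ℝ := Xᵀ * X with hAdef
  have hAsymm : Aᵀ = A := by
    rw [hAdef, transpose_mul, transpose_transpose]
  obtain ⟨h1, h2, h3, h4⟩ := hG
  have hGT : Gᵀ = G := mp_transpose_self hAsymm ⟨h1, h2, h3, h4⟩
  -- G is PSD
  have hGpsd : G.PosSemidef := by
    have : ((X * G)ᴴ * (X * G)).PosSemidef := posSemidef_conjTranspose_mul_self (X * G)
    have e : (X * G)ᴴ * (X * G) = G := by
      rw [conjTranspose_eq_transpose_of_trivial, transpose_mul]
      calc Gᵀ * Xᵀ * (X * G) = G * Xᵀ * (X * G) := by rw [hGT]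
        _ = G * (Xᵀ * X) * G := by rw [Matrix.mul_assoc, Matrix.mul_assoc, Matrix.mul_assoc]
        _ = G := h2
    rwa [e] at this
  set clmP := fun M : Matrix (Fin p) (Fin p) ℝ => Matrix.toEuclideanCLM (𝕜 := ℝ) M with hclmP
  -- the projection X G Xᵀ has norm at most 1
  have hPnorm : ‖Matrix.toEuclideanCLM (𝕜 := ℝ) (X * G * Xᵀ)‖ ≤ 1 := by
    set a := Matrix.toEuclideanCLM (𝕜 := ℝ) (X * G * Xᵀ) with ha
    have hidem : (X * G * Xᵀ) * (X * G * Xᵀ) = X * G * Xᵀ := by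
      have h2' : G * (Xᵀ * X) * G = G := h2
      calc (X * G * Xᵀ) * (X * G * Xᵀ) = X * (G * (Xᵀ * X) * G) * Xᵀ := by
            simp only [Matrix.mul_assoc]
        _ = X * G * Xᵀ := by rw [h2', Matrix.mul_assoc]
    have hsymP : (X * G * Xᵀ)ᵀ = X * G * Xᵀ := by
      rw [transpose_mul, transpose_mul, transpose_transpose, hGT, ← Matrix.mul_assoc]
    have haa : a * a = a := by rw [ha, ← _root_.map_mul, hidem]
    have hstar : star a = a := by
      rw [ha, ← map_star, star_matrix_real, hsymP]
    have hC : ‖a‖ * ‖a‖ = ‖a‖ := by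
      calc ‖a‖ * ‖a‖ = ‖star a * a‖ := (CStarRing.norm_star_mul_self).symm
        _ = ‖a * a‖ := by rw [hstar]
        _ = ‖a‖ := by rw [haa]
    nlinarith [norm_nonneg a]
  -- identify Λ
  set H : Matrix (Fin K) (Fin K) ℝ := (Fᵀ * F)⁻¹ with hHdef
  have hHT : Hᵀ = H := by
    rw [hHdef, Matrix.transpose_nonsing_inv, transpose_mul, transpose_transpose]
  set D : Matrix (Fin n) (Fin p) ℝ := X - U with hDdef
  have hFD : D = F * Λᵀ := by rw [hDdef, hX]; abel
  have hΛT : Λᵀ = H * (Fᵀ * D) := by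
    rw [hFD, hHdef, ← Matrix.mul_assoc Fᵀ F Λᵀ, ← Matrix.mul_assoc,
      Matrix.nonsing_inv_mul _ hFF, Matrix.one_mul]
  have hΛ : Λ = (Dᵀ * F) * H := by
    have := congrArg Matrix.transpose hΛT
    rw [transpose_transpose, transpose_mul, transpose_mul, transpose_transpose, hHT] at this
    rw [this]
  set M : Matrix (Fin n) (Fin n) ℝ := D * G * Dᵀ with hMdef
  have hMpsd : M.PosSemidef := by
    have := hGpsd.mul_mul_conjTranspose_same D
    rwa [conjTranspose_eq_transpose_of_trivial] at this
  set Q : Matrix (Fin n) (Fin n) ℝ := U * G * Uᵀ with hQdef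
  set c : ℝ := 2 * (1 + ‖Matrix.toEuclideanCLM (𝕜 := ℝ) Q‖) with hcdef
  have hQnn : 0 ≤ ‖Matrix.toEuclideanCLM (𝕜 := ℝ) Q‖ := norm_nonneg _
  have hcnn : (0:ℝ) ≤ c := by rw [hcdef]; linarith
  -- bound on ‖clm M‖
  have hMnorm : ‖Matrix.toEuclideanCLM (𝕜 := ℝ) M‖ ≤ c := by
    set R : Matrix (Fin n) (Fin n) ℝ := (X * G * Xᵀ + Q) + (X * G * Xᵀ + Q) with hRdef
    have hexp : R - M = (X + U) * G * (X + U)ᵀ := by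
      rw [hRdef, hMdef, hQdef, hDdef]
      simp only [transpose_add, transpose_sub, Matrix.add_mul, Matrix.mul_add,
        Matrix.sub_mul, Matrix.mul_sub]
      try abel
    have hRMpsd : (R - M).PosSemidef := by
      rw [hexp]
      have := hGpsd.mul_mul_conjTranspose_same (X + U)
      rwa [conjTranspose_eq_transpose_of_trivial] at this
    have hle : ‖Matrix.toEuclideanCLM (𝕜 := ℝ) M‖ ≤ ‖Matrix.toEuclideanCLM (𝕜 := ℝ) R‖ := by
      apply opNorm_le_opNorm_of_isPositive (psd_toEuclideanCLM_isPositive hMpsd)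
      rw [← _root_.map_sub]
      exact psd_toEuclideanCLM_isPositive hRMpsd
    have hR : ‖Matrix.toEuclideanCLM (𝕜 := ℝ) R‖ ≤ c := by
      rw [hRdef, _root_.map_add, _root_.map_add, hcdef]
      have n1 := norm_add_le (Matrix.toEuclideanCLM (𝕜 := ℝ) (X * G * Xᵀ))
        (Matrix.toEuclideanCLM (𝕜 := ℝ) Q)
      have n2 := norm_add_le (Matrix.toEuclideanCLM (𝕜 := ℝ) (X * G * Xᵀ) +
        Matrix.toEuclideanCLM (𝕜 := ℝ) Q) (Matrix.toEuclideanCLM (𝕜 := ℝ) (X * G * Xᵀ) +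
        Matrix.toEuclideanCLM (𝕜 := ℝ) Q)
      linarith [hPnorm]
    linarith
  -- middle bound
  have hMid : ‖Matrix.toEuclideanCLM (𝕜 := ℝ) (Fᵀ * M * F)‖ ≤
      c * ‖Matrix.toEuclideanCLM (𝕜 := ℝ) (Fᵀ * F)‖ := by
    have hdiffpsd : (c • (1 : Matrix (Fin n) (Fin n) ℝ) - M).PosSemidef := by
      refine Matrix.PosSemidef.of_dotProduct_mulVec_nonneg ?_ ?_
      · show _ᴴ = _
        rw [conjTranspose_sub, conjTranspose_smul, conjTranspose_one, hMpsd.isHermitian.eq]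
        norm_num
      · intro x
        set T := Matrix.toEuclideanCLM (𝕜 := ℝ) M with hT
        set y : EuclideanSpace ℝ (Fin n) := (WithLp.equiv 2 _).symm x with hy
        have hinner : star x ⬝ᵥ (M *ᵥ x) = ⟪y, T y⟫ := by
          rw [EuclideanSpace.inner_eq_star_dotProduct, hT, Matrix.ofLp_toEuclideanCLM]
          simp [hy, dotProduct_comm]
        have hself : star x ⬝ᵥ x = ‖y‖ ^ 2 := by
          rw [← real_inner_self_eq_norm_sq, EuclideanSpace.inner_eq_star_dotProduct]
          simp [hy]
        have hTy : ⟪y, T y⟫ ≤ c * ‖y‖ ^ 2 := by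
          have h1 : ⟪y, T y⟫ ≤ ‖y‖ * ‖T y‖ := real_inner_le_norm _ _
          nlinarith [T.le_opNorm y, norm_nonneg y, norm_nonneg (T y), hMnorm, hcnn]
        have expand : star x ⬝ᵥ ((c • (1 : Matrix (Fin n) (Fin n) ℝ) - M) *ᵥ x)
            = c * (star x ⬝ᵥ x) - star x ⬝ᵥ (M *ᵥ x) := by
          rw [Matrix.sub_mulVec, dotProduct_sub, Matrix.smul_mulVec,
            Matrix.one_mulVec, dotProduct_smul]
          simp [smul_eq_mul]
        rw [expand, hinner, hself]
        linarith
    have hsandwich : (Fᵀ * (c • (1 : Matrix (Fin n) (Fin n) ℝ) - M) * F).PosSemidef := by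
      have := hdiffpsd.conjTranspose_mul_mul_same F
      rwa [conjTranspose_eq_transpose_of_trivial] at this
    have hid : Fᵀ * (c • (1 : Matrix (Fin n) (Fin n) ℝ) - M) * F
        = c • (Fᵀ * F) - Fᵀ * M * F := by
      rw [Matrix.mul_sub, Matrix.sub_mul]
      congr 1
      rw [Matrix.mul_smul, Matrix.mul_one, Matrix.smul_mul]
    rw [hid] at hsandwich
    have hFMpsd : (Fᵀ * M * F).PosSemidef := by
      have := hMpsd.conjTranspose_mul_mul_same F
      rwa [conjTranspose_eq_transpose_of_trivial] at this
    have := opNorm_le_opNorm_of_isPositive (T := Matrix.toEuclideanCLM (𝕜 := ℝ) (Fᵀ * M * F))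
      (S := Matrix.toEuclideanCLM (𝕜 := ℝ) (c • (Fᵀ * F)))
      (psd_toEuclideanCLM_isPositive hFMpsd)
      (by rw [← _root_.map_sub]; exact psd_toEuclideanCLM_isPositive hsandwich)
    refine le_trans this ?_
    rw [_root_.map_smul]
    calc ‖c • Matrix.toEuclideanCLM (𝕜 := ℝ) (Fᵀ * F)‖
        ≤ ‖c‖ * ‖Matrix.toEuclideanCLM (𝕜 := ℝ) (Fᵀ * F)‖ :=
          ContinuousLinearMap.opNorm_smul_le _ _
      _ = c * ‖Matrix.toEuclideanCLM (𝕜 := ℝ) (Fᵀ * F)‖ := by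
          rw [Real.norm_eq_abs, abs_of_nonneg hcnn]
  -- key identity
  have key : Λᵀ * G * Λ = H * (Fᵀ * M * F) * H := by
    rw [hΛT, hΛ, hMdef]
    simp only [Matrix.mul_assoc]
  -- combine
  have hfactor : ‖Matrix.toEuclideanCLM (𝕜 := ℝ) (Λᵀ * G * Λ)‖ ≤
      ‖Matrix.toEuclideanCLM (𝕜 := ℝ) H‖ *
      ‖Matrix.toEuclideanCLM (𝕜 := ℝ) (Fᵀ * M * F)‖ *
      ‖Matrix.toEuclideanCLM (𝕜 := ℝ) H‖ := by
    rw [key, _root_.map_mul, _root_.map_mul]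
    calc ‖Matrix.toEuclideanCLM (𝕜 := ℝ) H * Matrix.toEuclideanCLM (𝕜 := ℝ) (Fᵀ * M * F) *
            Matrix.toEuclideanCLM (𝕜 := ℝ) H‖
        ≤ ‖Matrix.toEuclideanCLM (𝕜 := ℝ) H * Matrix.toEuclideanCLM (𝕜 := ℝ) (Fᵀ * M * F)‖ *
            ‖Matrix.toEuclideanCLM (𝕜 := ℝ) H‖ := norm_mul_le _ _
      _ ≤ ‖Matrix.toEuclideanCLM (𝕜 := ℝ) H‖ * ‖Matrix.toEuclideanCLM (𝕜 := ℝ) (Fᵀ * M * F)‖ *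
            ‖Matrix.toEuclideanCLM (𝕜 := ℝ) H‖ := by
          apply mul_le_mul_of_nonneg_right (norm_mul_le _ _) (norm_nonneg _)
  have hHnn : 0 ≤ ‖Matrix.toEuclideanCLM (𝕜 := ℝ) H‖ := norm_nonneg _
  have hFFnn : 0 ≤ ‖Matrix.toEuclideanCLM (𝕜 := ℝ) (Fᵀ * F)‖ := norm_nonneg _
  have hchain : ‖Matrix.toEuclideanCLM (𝕜 := ℝ) (Λᵀ * G * Λ)‖ ≤
      ‖Matrix.toEuclideanCLM (𝕜 := ℝ) H‖ *
      (c * ‖Matrix.toEuclideanCLM (𝕜 := ℝ) (Fᵀ * F)‖) *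
      ‖Matrix.toEuclideanCLM (𝕜 := ℝ) H‖ := by
    refine le_trans hfactor ?_
    apply mul_le_mul_of_nonneg_right _ hHnn
    exact mul_le_mul_of_nonneg_left hMid hHnn
  calc ‖Matrix.toEuclideanCLM (𝕜 := ℝ) (Λᵀ * G * Λ)‖
      ≤ ‖Matrix.toEuclideanCLM (𝕜 := ℝ) H‖ *
        (c * ‖Matrix.toEuclideanCLM (𝕜 := ℝ) (Fᵀ * F)‖) *
        ‖Matrix.toEuclideanCLM (𝕜 := ℝ) H‖ := hchain
    _ = 2 * ‖Matrix.toEuclideanCLM (𝕜 := ℝ) (Fᵀ * F)⁻¹‖ *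
        ‖Matrix.toEuclideanCLM (𝕜 := ℝ) (Fᵀ * F)‖ *
        ‖Matrix.toEuclideanCLM (𝕜 := ℝ) (Fᵀ * F)⁻¹‖ *
        (1 + ‖Matrix.toEuclideanCLM (𝕜 := ℝ) (U * G * Uᵀ)‖) := by
      rw [hcdef, hQdef, hHdef]; ring
end

section
/- Let Σ_u be p₀ × p₀ positive definite with largest eigenvalue at most σ_u², Λ_I a p₀ × K matrix, and ρ ∈ ℝᴷ. If σ_K(Λ_IᵀΛ_I) ≥ σ_u² (i.e. the smallest nonzero eigenvalue of Λ_IᵀΛ_I is at least σ_u²), then ρᵀ Λ_Iᵀ (Λ_I Λ_Iᵀ + σ_u² I_{p₀})⁻¹ Λ_I ρ ≥ ‖ρ‖²/2. -/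
open Matrix

/-- Ridge-bias key inequality (Theorem 3): if the smallest eigenvalue of `Λ_IᵀΛ_I`
is at least `σ_u²` (itself an upper bound on the eigenvalues of `Σ_u`), then
`ρᵀ Λ_Iᵀ (Λ_I Λ_Iᵀ + σ_u² I)⁻¹ Λ_I ρ ≥ ‖ρ‖²/2`. -/
theorem ridge_bias_key_inequality {p₀ K : ℕ}
    (ΛI : Matrix (Fin p₀) (Fin K) ℝ) (ρ : Fin K → ℝ)
    (Su : Matrix (Fin p₀) (Fin p₀) ℝ) (su2 : ℝ) (hsu : 0 < su2)
    (hSu : Su.PosDef)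
    (hSu_le : ∀ x : Fin p₀ → ℝ, x ⬝ᵥ (Su *ᵥ x) ≤ su2 * (x ⬝ᵥ x))
    (hmin : ∀ x : Fin K → ℝ, su2 * (x ⬝ᵥ x) ≤ x ⬝ᵥ ((ΛIᵀ * ΛI) *ᵥ x)) :
    ρ ⬝ᵥ (ΛIᵀ *ᵥ ((ΛI * ΛIᵀ + su2 • (1 : Matrix (Fin p₀) (Fin p₀) ℝ))⁻¹ *ᵥ (ΛI *ᵥ ρ)))
      ≥ (ρ ⬝ᵥ ρ) / 2 := by
  set A : Matrix (Fin K) (Fin K) ℝ := ΛIᵀ * ΛI with hA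
  set N : Matrix (Fin K) (Fin K) ℝ := A + su2 • 1 with hN
  set M : Matrix (Fin p₀) (Fin p₀) ℝ := ΛI * ΛIᵀ + su2 • 1 with hM
  have hsm1 : ∀ (n : ℕ), (su2 • (1 : Matrix (Fin n) (Fin n) ℝ)).PosDef := by
    intro n
    exact Matrix.PosDef.one.smul hsu
  have hAps : A.PosSemidef := by
    have := Matrix.posSemidef_conjTranspose_mul_self ΛI
    simpa [Matrix.conjTranspose_eq_transpose_of_trivial] using this
  have hNpd : N.PosDef := Matrix.PosDef.posSemidef_add hAps (hsm1 K)
  have hMpd : M.PosDef := Matrix.PosDef.posSemidef_add (by simpa [Matrix.conjTranspose_eq_transpose_of_trivial] using Matrix.posSemidef_self_mul_conjTranspose ΛI)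
    (by simpa [Matrix.conjTranspose_eq_transpose_of_trivial] using hsm1 p₀)
  have hNinv : N * N⁻¹ = 1 := Matrix.mul_nonsing_inv _ (Matrix.isUnit_iff_isUnit_det _ |>.1 hNpd.isUnit)
  have hNinv' : N⁻¹ * N = 1 := Matrix.nonsing_inv_mul _ (Matrix.isUnit_iff_isUnit_det _ |>.1 hNpd.isUnit)
  have hMinv' : M⁻¹ * M = 1 := Matrix.nonsing_inv_mul _ (Matrix.isUnit_iff_isUnit_det _ |>.1 hMpd.isUnit)
  have hcomm : M * ΛI = ΛI * N := by
    rw [hM, hN, hA]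
    simp [Matrix.add_mul, Matrix.mul_add, Matrix.smul_mul, Matrix.mul_smul, Matrix.mul_assoc]
  have hinv : M⁻¹ * ΛI = ΛI * N⁻¹ := by
    have h2 : M * (ΛI * N⁻¹) = ΛI := by
      rw [← Matrix.mul_assoc, hcomm, Matrix.mul_assoc, hNinv, Matrix.mul_one]
    have h1 : M⁻¹ * (M * (ΛI * N⁻¹)) = ΛI * N⁻¹ := by
      rw [← Matrix.mul_assoc, hMinv', Matrix.one_mul]
    rw [h2] at h1; exact h1
  have hkey : ΛIᵀ * M⁻¹ * ΛI = A * N⁻¹ := by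
    rw [Matrix.mul_assoc, hinv, ← Matrix.mul_assoc, ← hA]
  -- rewrite goal
  rw [Matrix.mulVec_mulVec, Matrix.mulVec_mulVec, hkey]
  set y : Fin K → ℝ := N⁻¹ *ᵥ ρ with hy
  have hρ : ρ = N *ᵥ y := by
    rw [hy, Matrix.mulVec_mulVec, hNinv, Matrix.one_mulVec]
  have hANy : (A * N⁻¹) *ᵥ ρ = A *ᵥ y := by
    rw [← Matrix.mulVec_mulVec, hy]
  rw [hANy]
  -- symmetry of A and N
  have hAsymm : Aᵀ = A := by rw [hA]; simp [Matrix.transpose_mul]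
  have hNsymm : Nᵀ = N := by rw [hN]; simp [Matrix.transpose_add, hAsymm]
  have hswap : ∀ (v w : Fin K → ℝ), (N *ᵥ v) ⬝ᵥ w = v ⬝ᵥ (N *ᵥ w) := by
    intro v w
    rw [Matrix.dotProduct_mulVec v N w, ← Matrix.mulVec_transpose, hNsymm]
  have hAswap : ∀ (v w : Fin K → ℝ), (A *ᵥ v) ⬝ᵥ w = v ⬝ᵥ (A *ᵥ w) := by
    intro v w
    rw [Matrix.dotProduct_mulVec v A w, ← Matrix.mulVec_transpose, hAsymm]
  set a : ℝ := (A *ᵥ y) ⬝ᵥ (A *ᵥ y) with ha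
  set b : ℝ := y ⬝ᵥ (A *ᵥ y) with hb
  set c : ℝ := y ⬝ᵥ y with hc
  have hNy : N *ᵥ y = A *ᵥ y + su2 • y := by
    rw [hN, Matrix.add_mulVec, Matrix.smul_mulVec, Matrix.one_mulVec]
  have huy : (A *ᵥ y) ⬝ᵥ y = b := by rw [hb, dotProduct_comm]
  have hLHS : ρ ⬝ᵥ (A *ᵥ y) = a + su2 * b := by
    rw [hρ, hNy, add_dotProduct, smul_dotProduct, smul_eq_mul, ← ha, ← hb]
  have hRHS : ρ ⬝ᵥ ρ = a + 2 * su2 * b + su2 ^ 2 * c := by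
    rw [hρ, hNy]
    simp only [add_dotProduct, dotProduct_add, smul_dotProduct, dotProduct_smul, smul_eq_mul]
    rw [huy, ← ha, ← hb, ← hc]
    ring
  have hc0 : (0:ℝ) ≤ c := by
    have : c = ∑ i, y i * y i := rfl
    rw [this]
    exact Finset.sum_nonneg fun i _ => mul_self_nonneg _
  have ha0 : (0:ℝ) ≤ a := by
    have : a = ∑ i, (A *ᵥ y) i * (A *ᵥ y) i := rfl
    rw [this]
    exact Finset.sum_nonneg fun i _ => mul_self_nonneg _
  have hbc : su2 * c ≤ b := hmin y
  have hcs : b ^ 2 ≤ c * a := by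
    have := Finset.sum_mul_sq_le_sq_mul_sq Finset.univ y (A *ᵥ y)
    simpa [hb, hc, ha, dotProduct, sq] using this
  have hkey2 : su2 ^ 2 * c ≤ a := by
    rcases eq_or_lt_of_le hc0 with h | h
    · rw [← h, mul_zero]; exact ha0
    · have hb0 : 0 < b := lt_of_lt_of_le (mul_pos hsu h) hbc
      have h1 : su2 ^ 2 * c ^ 2 ≤ b ^ 2 := by nlinarith [mul_le_mul hbc hbc (le_of_lt (mul_pos hsu h)) hb0.le]
      exact le_of_mul_le_mul_left (by nlinarith) h
  rw [hLHS, hRHS]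
  linarith [hkey2]
end
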